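/- The function f is submodular in the lattice sense: for all finite sets of labeled points A and B, one has f(A ∪ B) + f(A ∩ B) ≤ f(A) + f(B). -/

import Mathlib

open scoped Classical

/-- The set of hypotheses in `H` consistent with every labeled point in `A`. -/
def consistentSet {X Y : Type*} [DecidableEq Y] (H : Finset (X → Y))
    (A : Finset (X × Y)) : Finset (X → Y) :=
  H.filter fun h => ∀ p ∈ A, h p.1 = p.2

/-- `f(A) = 1 − |H_A| / |H|`. -/
noncomputable def fval {X Y : Type*} [DecidableEq Y] (H : Finset (X → Y))
    (A : Finset (X × Y)) : ℝ :=
  1 - (consistentSet H A).card / H.card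

/-- `f` is submodular in the lattice sense:
`f(A ∪ B) + f(A ∩ B) ≤ f(A) + f(B)`. -/
theorem fval_submodular_lattice {X Y : Type*} [DecidableEq X] [DecidableEq Y]
    (H : Finset (X → Y)) (hH : H.Nonempty)
    (A B : Finset (X × Y)) :
    fval H (A ∪ B) + fval H (A ∩ B) ≤ fval H A + fval H B := by
  have hinter : consistentSet H (A ∪ B) = consistentSet H A ∩ consistentSet H B := by
    ext h
    simp only [consistentSet, Finset.mem_filter, Finset.mem_inter, Finset.mem_union]
    constructor
    · rintro ⟨hh, hc⟩
      exact ⟨⟨hh, fun p hp => hc p (Or.inl hp)⟩, hh, fun p hp => hc p (Or.inr hp)⟩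
    · rintro ⟨⟨hh, hA⟩, _, hB⟩
      exact ⟨hh, fun p hp => hp.elim (hA p) (hB p)⟩
  have hsub : consistentSet H A ∪ consistentSet H B ⊆ consistentSet H (A ∩ B) := by
    intro h hh
    simp only [consistentSet, Finset.mem_filter, Finset.mem_union, Finset.mem_inter] at hh ⊢
    rcases hh with ⟨hh, hA⟩ | ⟨hh, hB⟩
    · exact ⟨hh, fun p hp => hA p hp.1⟩
    · exact ⟨hh, fun p hp => hB p hp.2⟩
  have hcard : (consistentSet H A).card + (consistentSet H B).card ≤
      (consistentSet H (A ∪ B)).card + (consistentSet H (A ∩ B)).card := by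
    rw [hinter]
    calc (consistentSet H A).card + (consistentSet H B).card
        = (consistentSet H A ∩ consistentSet H B).card
          + (consistentSet H A ∪ consistentSet H B).card := by
          rw [add_comm ((consistentSet H A ∩ consistentSet H B).card)]
          exact (Finset.card_union_add_card_inter _ _).symm
      _ ≤ _ := by
          exact add_le_add_right (Finset.card_le_card hsub) _
  have hHpos : (0 : ℝ) < H.card := by
    exact_mod_cast Finset.card_pos.mpr hH
  unfold fval
  have h2 : ((consistentSet H A).card : ℝ) / H.card + (consistentSet H B).card / H.card ≤
      ((consistentSet H (A ∪ B)).card : ℝ) / H.card + (consistentSet H (A ∩ B)).card / H.card := by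
    rw [← add_div, ← add_div]
    apply div_le_div_of_nonneg_right ?_ hHpos.le
    exact_mod_cast hcard
  linarith
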